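/- In the bidirectional structural model under Assumption 1, with σ > 0 and βxy·βyx ≠ 1, define c = 1/(1 − βxy·βyx), λ1 = σ²c²(1 + βyx²), λ2 = σ²c²(1 + βxy²), and Probit coefficients ξxz = c·μxz/√λ1, ξxw = c·βyx·μyw/√λ1, ξyz = c·βxy·μxz/√λ2, ξyw = c·μyw/√λ2. Then the identity (ξxw² − ξyw²)·μxz² = (ξyz² − ξxz²)·μyw² holds; in particular the two differences ξxw² − ξyw² and ξyz² − ξxz² always have the same sign, so the radicands appearing in the identification formulas of Proposition 1 are nonnegative. -/

import Mathlib

/-- the key identity relating the differences of squared Probit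
coefficients, which in particular shows that the two differences always have
the same sign (their product is nonnegative), so the radicands in the
identification formulas of Proposition 1 are nonnegative. -/
theorem stmt_7 (μx0 μy0 μxz μyw βxy βyx σ : ℝ)
    (hσ : 0 < σ) (hβ : βxy * βyx ≠ 1)
    (c lam1 lam2 ξxz ξxw ξyz ξyw : ℝ)
    (hc : c = 1 / (1 - βxy * βyx))
    (hlam1 : lam1 = σ ^ 2 * c ^ 2 * (1 + βyx ^ 2))
    (hlam2 : lam2 = σ ^ 2 * c ^ 2 * (1 + βxy ^ 2))
    (hξxz : ξxz = c * μxz / Real.sqrt lam1)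
    (hξxw : ξxw = c * βyx * μyw / Real.sqrt lam1)
    (hξyz : ξyz = c * βxy * μxz / Real.sqrt lam2)
    (hξyw : ξyw = c * μyw / Real.sqrt lam2) :
    (ξxw ^ 2 - ξyw ^ 2) * μxz ^ 2 = (ξyz ^ 2 - ξxz ^ 2) * μyw ^ 2 ∧
    0 ≤ (ξxw ^ 2 - ξyw ^ 2) * (ξyz ^ 2 - ξxz ^ 2) := by
  have hcne : c ≠ 0 := by
    rw [hc]
    have : (1 : ℝ) - βxy * βyx ≠ 0 := sub_ne_zero.mpr (Ne.symm hβ)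
    simp [this]
  have hl1 : 0 < lam1 := by
    rw [hlam1]; positivity
  have hl2 : 0 < lam2 := by
    rw [hlam2]; positivity
  have s1 : Real.sqrt lam1 ^ 2 = lam1 := Real.sq_sqrt hl1.le
  have s2 : Real.sqrt lam2 ^ 2 = lam2 := Real.sq_sqrt hl2.le
  have s1ne : Real.sqrt lam1 ≠ 0 := ne_of_gt (Real.sqrt_pos.mpr hl1)
  have s2ne : Real.sqrt lam2 ≠ 0 := ne_of_gt (Real.sqrt_pos.mpr hl2)
  have key : (ξxw ^ 2 - ξyw ^ 2) * μxz ^ 2 = (ξyz ^ 2 - ξxz ^ 2) * μyw ^ 2 := by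
    subst hξxz hξxw hξyz hξyw
    field_simp
    rw [s1, s2, hlam1, hlam2]
    ring
  refine ⟨key, ?_⟩
  rcases eq_or_ne μxz 0 with h | h
  · have : ξyz ^ 2 - ξxz ^ 2 = 0 := by rw [hξyz, hξxz, h]; ring
    simp [this]
  · have h2 : 0 < μxz ^ 2 := by positivity
    nlinarith [sq_nonneg ((ξyz ^ 2 - ξxz ^ 2) * μyw), sq_nonneg μyw, key,
      mul_self_nonneg (ξyz ^ 2 - ξxz ^ 2)]
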